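/- Let H = H¹σ₁ + H²σ₂ + H³σ₃ with H¹,H²,H³ ∈ ℝ (a traceless Hermitian 2×2 matrix), let z₁,…,z₄ ∈ ℂ and j₁,…,j₄ > 0, and define F(t) = Σᵢ jᵢ · log⟨v(zᵢ), exp(tH) v(zᵢ)⟩ (each inner product is a positive real since exp(tH) is positive definite). Then F′(0) = −Σᵢ jᵢ (H¹N₁(zᵢ) + H²N₂(zᵢ) + H³N₃(zᵢ)) and F″(0) = Σᵢ jᵢ ((H¹)²+(H²)²+(H³)² − (H¹N₁(zᵢ)+H²N₂(zᵢ)+H³N₃(zᵢ))²). (The first and second derivatives of the logarithm of the coherent-state norm along imaginary directions are minus the moment map H_X and minus the orbit metric G(X,X), point 1 of the paper's Proposition.) -/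

import Mathlib

open Matrix

/-- Inverse stereographic projection: the unit vector `N(z) ∈ ℝ³` associated to `z ∈ ℂ`. -/
noncomputable def Nvec (z : ℂ) : Fin 3 → ℝ :=
  ![-2 * z.re / (1 + ‖z‖ ^ 2),
    2 * z.im / (1 + ‖z‖ ^ 2),
    (1 - ‖z‖ ^ 2) / (1 + ‖z‖ ^ 2)]

/-- The unit spinor `v(z) = (1+|z|²)^(−1/2) (z,1)ᵀ ∈ ℂ²`. -/
noncomputable def vspin (z : ℂ) : Fin 2 → ℂ :=
  ![z / (Real.sqrt (1 + ‖z‖ ^ 2) : ℝ), 1 / (Real.sqrt (1 + ‖z‖ ^ 2) : ℝ)]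

/-- Hermitian inner product on ℂ², conjugate-linear in the first argument. -/
def inner2 (u w : Fin 2 → ℂ) : ℂ :=
  starRingEnd ℂ (u 0) * w 0 + starRingEnd ℂ (u 1) * w 1

/-- The Pauli matrices σ₁, σ₂, σ₃. -/
def pauli : Fin 3 → Matrix (Fin 2) (Fin 2) ℂ :=
  ![!![0, 1; 1, 0], !![0, -Complex.I; Complex.I, 0], !![1, 0; 0, -1]]


section Helpers

open Nat

set_option maxHeartbeats 1000000 in
private lemma exp_smul_idem' (P : Matrix (Fin 2) (Fin 2) ℂ) (hP : P * P = P) (c : ℂ) :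
    NormedSpace.exp (c • P) = 1 + (Complex.exp c - 1) • P := by
  letI : SeminormedRing (Matrix (Fin 2) (Fin 2) ℂ) := Matrix.linftyOpSemiNormedRing
  letI : NormedRing (Matrix (Fin 2) (Fin 2) ℂ) := Matrix.linftyOpNormedRing
  letI : NormedAlgebra ℂ (Matrix (Fin 2) (Fin 2) ℂ) := Matrix.linftyOpNormedAlgebra
  have hPn : ∀ n : ℕ, P ^ (n + 1) = P := by
    intro n
    induction n with
    | zero => simp
    | succ k ih => rw [pow_succ, ih, hP]
  have hs : Summable fun n : ℕ => ((n.factorial : ℂ))⁻¹ • (c • P) ^ n :=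
    NormedSpace.expSeries_summable' (𝕂 := ℂ) (c • P)
  have hsc : Summable fun n : ℕ => ((n.factorial : ℂ))⁻¹ * c ^ n := by
    simpa using NormedSpace.expSeries_summable' (𝕂 := ℂ) c
  have hsc' : Summable fun n : ℕ => (((n+1).factorial : ℂ))⁻¹ * c ^ (n+1) :=
    (summable_nat_add_iff 1).mpr hsc
  have key : ∀ n : ℕ, ((((n+1)).factorial : ℂ))⁻¹ • (c • P) ^ (n+1)
      = (((((n+1)).factorial : ℂ))⁻¹ * c ^ (n+1)) • P := by
    intro n
    rw [smul_pow, hPn, smul_smul]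
  simp only [NormedSpace.exp_eq_tsum ℂ]
  rw [hs.tsum_eq_zero_add]
  simp only [key]
  rw [hsc'.tsum_smul_const]
  have hexpc : Complex.exp c = ∑' n : ℕ, ((n.factorial : ℂ))⁻¹ * c ^ n := by
    rw [congrFun Complex.exp_eq_exp_ℂ c]
    simp [NormedSpace.exp_eq_tsum ℂ, smul_eq_mul]
  have hshift : ∑' n : ℕ, ((n.factorial : ℂ))⁻¹ * c ^ n
      = 1 + ∑' n : ℕ, (((n+1).factorial : ℂ))⁻¹ * c ^ (n+1) := by
    rw [hsc.tsum_eq_zero_add]; norm_num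
  rw [show (Complex.exp c - 1) = ∑' n : ℕ, (((n+1).factorial : ℂ))⁻¹ * c ^ (n+1) by
    rw [hexpc, hshift]; ring]
  simp

private lemma idem_plus' (M : Matrix (Fin 2) (Fin 2) ℂ) (hM : M * M = 1) :
    ((2:ℂ)⁻¹ • (1 + M)) * ((2:ℂ)⁻¹ • (1 + M)) = (2:ℂ)⁻¹ • (1 + M) := by
  rw [Matrix.smul_mul, Matrix.mul_smul, smul_smul,
    show (1 + M) * (1 + M) = 1 + M + M + M * M from by noncomm_ring <;> module, hM,
    show (1:Matrix (Fin 2) (Fin 2) ℂ) + M + M + 1 = (2:ℂ) • (1 + M) by module, smul_smul]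
  norm_num

private lemma idem_minus' (M : Matrix (Fin 2) (Fin 2) ℂ) (hM : M * M = 1) :
    ((2:ℂ)⁻¹ • (1 - M)) * ((2:ℂ)⁻¹ • (1 - M)) = (2:ℂ)⁻¹ • (1 - M) := by
  rw [Matrix.smul_mul, Matrix.mul_smul, smul_smul,
    show (1 - M) * (1 - M) = 1 - M - M + M * M from by noncomm_ring <;> module, hM,
    show (1:Matrix (Fin 2) (Fin 2) ℂ) - M - M + 1 = (2:ℂ) • (1 - M) by module, smul_smul]
  norm_num

private lemma mul_expand' (A B : Matrix (Fin 2) (Fin 2) ℂ) (a b : ℂ) (hAB : A * B = 0) :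
    (1 + a • A) * (1 + b • B) = 1 + a • A + b • B := by
  have h0 : a • A * (b • B) = 0 := by rw [Matrix.smul_mul, Matrix.mul_smul, hAB]; simp
  calc (1 + a • A) * (1 + b • B) = 1 + a • A + b • B + a • A * (b • B) := by
        noncomm_ring <;> module
  _ = 1 + a • A + b • B := by rw [h0, add_zero]

set_option maxHeartbeats 1000000 in
private lemma exp_formula (H : Matrix (Fin 2) (Fin 2) ℂ) (l : ℝ) (hl : 0 < l)
    (hH2 : H * H = ((l : ℂ) ^ 2) • 1) (t : ℝ) :
    NormedSpace.exp (t • H)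
      = ((Real.cosh (l * t) : ℝ) : ℂ) • 1 + ((Real.sinh (l * t) / l : ℝ) : ℂ) • H := by
  have hl0 : (l : ℂ) ≠ 0 := by exact_mod_cast hl.ne'
  have hKK : ((l : ℂ)⁻¹ • H) * ((l : ℂ)⁻¹ • H) = 1 := by
    rw [Matrix.smul_mul, Matrix.mul_smul, hH2, smul_smul, smul_smul]
    have hc : ((l:ℂ)⁻¹ * (l:ℂ)⁻¹ * (l:ℂ)^2) = 1 := by field_simp
    rw [hc, one_smul]
  have o1 : (1 + (l:ℂ)⁻¹ • H) * (1 - (l:ℂ)⁻¹ • H) = 0 := by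
    rw [show (1 + (l:ℂ)⁻¹ • H) * (1 - (l:ℂ)⁻¹ • H)
        = 1 - ((l:ℂ)⁻¹ • H) * ((l:ℂ)⁻¹ • H) from by noncomm_ring <;> module, hKK, sub_self]
  have o2 : (1 - (l:ℂ)⁻¹ • H) * (1 + (l:ℂ)⁻¹ • H) = 0 := by
    rw [show (1 - (l:ℂ)⁻¹ • H) * (1 + (l:ℂ)⁻¹ • H)
        = 1 - ((l:ℂ)⁻¹ • H) * ((l:ℂ)⁻¹ • H) from by noncomm_ring <;> module, hKK, sub_self]
  have hsplit : t • H = ((t * l : ℝ) : ℂ) • ((2:ℂ)⁻¹ • (1 + (l : ℂ)⁻¹ • H))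
      + ((-(t * l) : ℝ) : ℂ) • ((2:ℂ)⁻¹ • (1 - (l : ℂ)⁻¹ • H)) := by
    rw [← algebraMap_smul ℂ t H, Complex.coe_algebraMap]
    push_cast
    match_scalars <;> field_simp <;> try ring
  have hcomm : Commute (((t * l : ℝ) : ℂ) • ((2:ℂ)⁻¹ • (1 + (l : ℂ)⁻¹ • H)))
      (((-(t * l) : ℝ) : ℂ) • ((2:ℂ)⁻¹ • (1 - (l : ℂ)⁻¹ • H))) := by
    show _ = _
    simp only [Matrix.smul_mul, Matrix.mul_smul, o1, o2, smul_zero]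
  rw [hsplit, Matrix.exp_add_of_commute _ _ hcomm,
    exp_smul_idem' _ (idem_plus' _ hKK), exp_smul_idem' _ (idem_minus' _ hKK)]
  rw [mul_expand' _ _ _ _ (by
    simp only [Matrix.smul_mul, Matrix.mul_smul, o1, smul_zero])]
  rw [show ((Real.cosh (l * t) : ℝ) : ℂ)
      = (Complex.exp (((t*l : ℝ)) : ℂ) + Complex.exp (((-(t*l) : ℝ)) : ℂ))/2 from by
    rw [Real.cosh_eq]; push_cast; ring_nf]
  rw [show ((Real.sinh (l * t) / l : ℝ) : ℂ)
      = (Complex.exp (((t*l : ℝ)) : ℂ) - Complex.exp (((-(t*l) : ℝ)) : ℂ))/(2*l) from by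
    rw [Real.sinh_eq]; push_cast; field_simp]
  match_scalars <;> field_simp <;> try ring

private lemma abs_sq_eq (z : ℂ) : (‖z‖)^2 = z.re^2 + z.im^2 := by
  rw [Complex.sq_norm, Complex.normSq_apply]; ring

private lemma one_add_abs_pos (z : ℂ) : (0:ℝ) < 1 + ‖z‖ ^ 2 := by positivity

private lemma vspin_eq (z : ℂ) :
    vspin z = ((Real.sqrt (1 + ‖z‖ ^ 2) : ℂ))⁻¹ • ![z, 1] := by
  funext i
  fin_cases i <;> simp [vspin, div_eq_inv_mul, smul_eq_mul]

private lemma inner2_smul_left (a : ℂ) (u w : Fin 2 → ℂ) :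
    inner2 (a • u) w = starRingEnd ℂ a * inner2 u w := by
  simp [inner2, smul_eq_mul]; ring

private lemma inner2_smul_right (a : ℂ) (u w : Fin 2 → ℂ) :
    inner2 u (a • w) = a * inner2 u w := by
  simp [inner2, smul_eq_mul]; ring

private lemma inner2_add_right (u w₁ w₂ : Fin 2 → ℂ) :
    inner2 u (w₁ + w₂) = inner2 u w₁ + inner2 u w₂ := by
  simp [inner2]; ring

private lemma inner2_vspin (z : ℂ) (M : Matrix (Fin 2) (Fin 2) ℂ) :
    inner2 (vspin z) (M.mulVec (vspin z))
      = (((1 + ‖z‖ ^ 2 : ℝ) : ℂ))⁻¹ * inner2 ![z, 1] (M.mulVec ![z, 1]) := by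
  have hsq : (Real.sqrt (1 + ‖z‖ ^ 2))^2 = 1 + ‖z‖ ^ 2 :=
    Real.sq_sqrt (one_add_abs_pos z).le
  rw [vspin_eq, Matrix.mulVec_smul, inner2_smul_left, inner2_smul_right, ← mul_assoc]
  congr 1
  rw [map_inv₀, Complex.conj_ofReal, ← mul_inv, ← Complex.ofReal_mul, ← sq, hsq]

private lemma inner2_one (z : ℂ) :
    inner2 ![z, 1] ![z, 1] = ((1 + ‖z‖ ^ 2 : ℝ) : ℂ) := by
  simp [inner2, Complex.ext_iff, Complex.mul_re, Complex.mul_im, abs_sq_eq z,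
    ← Complex.ofReal_pow, Complex.ofReal_re, Complex.ofReal_im]
  constructor <;> ring

private lemma inner_one (z : ℂ) : inner2 (vspin z) (vspin z) = 1 := by
  have h := inner2_vspin z 1
  simp only [Matrix.one_mulVec] at h
  rw [h, inner2_one, inv_mul_cancel₀]
  exact_mod_cast (one_add_abs_pos z).ne'

private lemma inner_H (H₁ H₂ H₃ : ℝ) (z : ℂ) :
    inner2 (vspin z) ((((H₁:ℂ) • pauli 0 + (H₂:ℂ) • pauli 1 + (H₃:ℂ) • pauli 2)).mulVec (vspin z))
      = ((-(H₁ * Nvec z 0 + H₂ * Nvec z 1 + H₃ * Nvec z 2) : ℝ) : ℂ) := by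
  have hd := one_add_abs_pos z
  have hd0 : ((1 + ‖z‖ ^ 2 : ℝ) : ℂ) ≠ 0 := by exact_mod_cast hd.ne'
  rw [inner2_vspin]
  have hmain : inner2 ![z, 1]
      ((((H₁:ℂ) • pauli 0 + (H₂:ℂ) • pauli 1 + (H₃:ℂ) • pauli 2)).mulVec ![z, 1])
      = ((2*H₁*z.re - 2*H₂*z.im - H₃*(1 - ‖z‖ ^ 2) : ℝ) : ℂ) := by
    simp [inner2, pauli, Matrix.mulVec, dotProduct, Fin.sum_univ_two,
      Complex.ext_iff, Complex.mul_re, Complex.mul_im, abs_sq_eq z,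
      ← Complex.ofReal_pow, Complex.ofReal_re, Complex.ofReal_im]
    constructor <;> ring
  rw [hmain]
  have hreal : (-(H₁ * Nvec z 0 + H₂ * Nvec z 1 + H₃ * Nvec z 2) : ℝ)
      = (1 + ‖z‖ ^ 2)⁻¹ * (2*H₁*z.re - 2*H₂*z.im - H₃*(1 - ‖z‖ ^ 2)) := by
    simp only [Nvec, Matrix.cons_val_zero, Matrix.cons_val_one, Matrix.head_cons,
      Matrix.cons_val_two, Matrix.tail_cons]
    field_simp
    ring
  rw [hreal]
  push_cast
  ring

private lemma Nvec_norm (z : ℂ) : (Nvec z 0)^2 + (Nvec z 1)^2 + (Nvec z 2)^2 = 1 := by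
  have hd := one_add_abs_pos z
  simp only [Nvec, Matrix.cons_val_zero, Matrix.cons_val_one, Matrix.head_cons,
    Matrix.cons_val_two, Matrix.tail_cons]
  rw [abs_sq_eq] at *
  field_simp
  ring

end Helpers

set_option maxHeartbeats 1000000 in
/-- First and second derivatives of `F(t) = Σᵢ jᵢ log⟨v(zᵢ), exp(tH) v(zᵢ)⟩` at `t = 0`, for a
traceless Hermitian `H = H¹σ₁ + H²σ₂ + H³σ₃`: they equal minus the moment map and minus the
orbit metric. -/
theorem deriv_log_coherent_norm
    (H₁ H₂ H₃ : ℝ) (z : Fin 4 → ℂ) (j : Fin 4 → ℝ) (hj : ∀ i, 0 < j i)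
    (H : Matrix (Fin 2) (Fin 2) ℂ)
    (hH : H = (H₁ : ℂ) • pauli 0 + (H₂ : ℂ) • pauli 1 + (H₃ : ℂ) • pauli 2)
    (F : ℝ → ℝ)
    (hF : ∀ t : ℝ, F t = ∑ i, j i *
      Real.log ((inner2 (vspin (z i)) ((NormedSpace.exp (t • H)).mulVec (vspin (z i)))).re)) :
    deriv F 0 =
      -∑ i, j i * (H₁ * Nvec (z i) 0 + H₂ * Nvec (z i) 1 + H₃ * Nvec (z i) 2) ∧
    deriv (deriv F) 0 =
      ∑ i, j i * ((H₁ ^ 2 + H₂ ^ 2 + H₃ ^ 2)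
        - (H₁ * Nvec (z i) 0 + H₂ * Nvec (z i) 1 + H₃ * Nvec (z i) 2) ^ 2) := by
  set l : ℝ := Real.sqrt (H₁^2 + H₂^2 + H₃^2) with hldef
  have hS : (0:ℝ) ≤ H₁^2 + H₂^2 + H₃^2 := by positivity
  have hl2 : l^2 = H₁^2 + H₂^2 + H₃^2 := Real.sq_sqrt hS
  rcases eq_or_lt_of_le (Real.sqrt_nonneg (H₁^2 + H₂^2 + H₃^2) : (0:ℝ) ≤ l) with hl0 | hl'
  · -- degenerate case : H = 0
    have hl0' : l = 0 := hl0.symm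
    have hz : H₁^2 + H₂^2 + H₃^2 = 0 := by rw [hl0'] at hl2; simpa using hl2.symm
    have h1 : H₁ = 0 := by nlinarith [sq_nonneg H₁, sq_nonneg H₂, sq_nonneg H₃]
    have h2 : H₂ = 0 := by nlinarith [sq_nonneg H₁, sq_nonneg H₂, sq_nonneg H₃]
    have h3 : H₃ = 0 := by nlinarith [sq_nonneg H₁, sq_nonneg H₂, sq_nonneg H₃]
    have hH0 : H = 0 := by rw [hH, h1, h2, h3]; push_cast; simp
    have hF0 : F = fun _ => (0:ℝ) := by
      funext t
      rw [hF t]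
      have ht0 : (t : ℝ) • H = 0 := by rw [hH0, smul_zero]
      rw [ht0, NormedSpace.exp_zero]
      simp [Matrix.one_mulVec, inner_one]
    rw [hF0]
    simp [h1, h2, h3, deriv_const]
  · -- main case
    have hH2 : H * H = ((l : ℂ) ^ 2) • 1 := by
      have hcast : ((l:ℝ):ℂ)^2 = ((H₁^2 + H₂^2 + H₃^2 : ℝ) : ℂ) := by
        rw [← hl2]; push_cast; ring
      rw [hcast, hH]
      ext i j
      fin_cases i <;> fin_cases j <;>
        simp [pauli, Matrix.mul_apply, Fin.sum_univ_two, Matrix.one_apply,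
          Complex.ext_iff, Complex.mul_re, Complex.mul_im, ← Complex.ofReal_pow,
          Complex.ofReal_re, Complex.ofReal_im] <;>
        constructor <;> first | trivial | ring
    set m : Fin 4 → ℝ := fun i =>
      -(H₁ * Nvec (z i) 0 + H₂ * Nvec (z i) 1 + H₃ * Nvec (z i) 2) with hmdef
    have hm2 : ∀ i, (m i)^2 ≤ l^2 := by
      intro i
      have hN := Nvec_norm (z i)
      rw [hl2]
      show (-(H₁ * Nvec (z i) 0 + H₂ * Nvec (z i) 1 + H₃ * Nvec (z i) 2))^2 ≤ _
      nlinarith [sq_nonneg (H₁ * Nvec (z i) 1 - H₂ * Nvec (z i) 0),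
        sq_nonneg (H₁ * Nvec (z i) 2 - H₃ * Nvec (z i) 0),
        sq_nonneg (H₂ * Nvec (z i) 2 - H₃ * Nvec (z i) 1)]
    set g : Fin 4 → ℝ → ℝ := fun i t => Real.cosh (l*t) + m i * Real.sinh (l*t) / l with hgdef
    have hgpos : ∀ i t, 0 < g i t := by
      intro i t
      have hc := Real.cosh_pos (l*t)
      have hcs := Real.cosh_sq_sub_sinh_sq (l*t)
      have h2 := hm2 i
      have key : 0 < l * Real.cosh (l*t) + m i * Real.sinh (l*t) := by
        nlinarith [mul_pos hl' hc, sq_nonneg (l * Real.sinh (l*t) + m i * Real.cosh (l*t)),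
          sq_nonneg (l * Real.cosh (l*t) + m i * Real.sinh (l*t))]
      have : g i t = (l * Real.cosh (l*t) + m i * Real.sinh (l*t)) / l := by
        rw [hgdef]; field_simp [show l ≠ 0 from hl'.ne']; try ring
      rw [this]
      exact div_pos key hl'
    -- F in explicit form
    have hinner : ∀ (i : Fin 4) (t : ℝ),
        inner2 (vspin (z i)) ((NormedSpace.exp (t • H)).mulVec (vspin (z i)))
          = ((g i t : ℝ) : ℂ) := by
      intro i t
      rw [exp_formula H l hl' hH2 t, Matrix.add_mulVec, Matrix.smul_mulVec,
        Matrix.smul_mulVec, Matrix.one_mulVec, inner2_add_right,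
        inner2_smul_right, inner2_smul_right, inner_one]
      rw [show H.mulVec (vspin (z i))
          = (((H₁:ℂ) • pauli 0 + (H₂:ℂ) • pauli 1 + (H₃:ℂ) • pauli 2)).mulVec (vspin (z i)) from
        by rw [← hH]]
      rw [inner_H H₁ H₂ H₃ (z i)]
      rw [hgdef, hmdef]
      push_cast
      ring
    have hFeq : F = fun t => ∑ i, j i * Real.log (g i t) := by
      funext t
      rw [hF t]
      apply Finset.sum_congr rfl
      intro i _
      rw [hinner i t, Complex.ofReal_re]
    -- first derivative
    have hg' : ∀ (i : Fin 4) (t : ℝ),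
        HasDerivAt (g i) (l * Real.sinh (l*t) + m i * Real.cosh (l*t)) t := by
      intro i t
      have hlin : HasDerivAt (fun s : ℝ => l * s) l t := by
        simpa using (hasDerivAt_id t).const_mul l
      have hcosh := (Real.hasDerivAt_cosh (l*t)).comp t hlin
      have hsinh := (Real.hasDerivAt_sinh (l*t)).comp t hlin
      have h4 := ((hsinh.const_mul (m i)).div_const l)
      have := hcosh.add h4
      refine (this : HasDerivAt (g i) _ t).congr_deriv ?_
      rw [mul_div_assoc, mul_div_cancel_right₀ _ (show l ≠ 0 from hl'.ne')]
      ring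
    have hF' : ∀ t : ℝ, HasDerivAt F
        (∑ i, j i * ((l * Real.sinh (l*t) + m i * Real.cosh (l*t)) / g i t)) t := by
      intro t
      rw [hFeq]
      apply HasDerivAt.fun_sum
      intro i _
      exact ((hg' i t).log (hgpos i t).ne').const_mul (j i)
    have hderiv1 : deriv F = fun t =>
        ∑ i, j i * ((l * Real.sinh (l*t) + m i * Real.cosh (l*t)) / g i t) :=
      funext fun t => (hF' t).deriv
    have hg0 : ∀ i, g i 0 = 1 := by
      intro i; rw [hgdef]; simp
    constructor
    · rw [hderiv1]
      simp only [mul_zero, Real.sinh_zero, Real.cosh_zero]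
      rw [← Finset.sum_neg_distrib]
      apply Finset.sum_congr rfl
      intro i _
      have := hg0 i
      rw [this, hmdef]
      ring
    · rw [hderiv1]
      have hD : HasDerivAt (fun t =>
          ∑ i, j i * ((l * Real.sinh (l*t) + m i * Real.cosh (l*t)) / g i t))
          (∑ i, j i * (((l * (Real.cosh (l*0) * l) + m i * (Real.sinh (l*0) * l)) * g i 0
            - (l * Real.sinh (l*0) + m i * Real.cosh (l*0))
              * (l * Real.sinh (l*0) + m i * Real.cosh (l*0))) / (g i 0)^2)) 0 := by
        apply HasDerivAt.fun_sum
        intro i _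
        have hlin : HasDerivAt (fun s : ℝ => l * s) l (0:ℝ) := by
          simpa using (hasDerivAt_id (0:ℝ)).const_mul l
        have hcosh := (Real.hasDerivAt_cosh (l*0)).comp (0:ℝ) hlin
        have hsinh := (Real.hasDerivAt_sinh (l*0)).comp (0:ℝ) hlin
        have hnum : HasDerivAt (fun t => l * Real.sinh (l*t) + m i * Real.cosh (l*t))
            (l * (Real.cosh (l*0) * l) + m i * (Real.sinh (l*0) * l)) 0 :=
          (hsinh.const_mul l).add (hcosh.const_mul (m i))
        exact ((hnum.div (hg' i 0) (hgpos i 0).ne')).const_mul (j i)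
      rw [hD.deriv]
      apply Finset.sum_congr rfl
      intro i _
      rw [hg0 i]
      simp only [mul_zero, Real.sinh_zero, Real.cosh_zero]
      rw [hmdef]
      rw [← hl2]
      ring
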